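/- Let (C,S) solve C' = γ(S³-S), S' = -(C³-C) on the level set of value a, and let k,l ∈ {-1,1}. Then the derivative of α_{kl}(φ) = C'(S-l) - (C-k)S' satisfies α_{kl}'(φ) = γ(C-k)(S-l)(kC - lS)(3klCS + kC + lS + 1). -/

import Mathlib

/-- for k,l ∈ {-1,1} and a solution (C,S) of
C' = γ(S³-S), S' = -(C³-C), the derivative of
α_{kl}(φ) = C'(S-l) - (C-k)S' is γ(C-k)(S-l)(kC-lS)(3klCS + kC + lS + 1). -/
theorem alpha_kl_deriv (γ : ℝ) (hγ : 0 < γ ∧ γ ≤ 1)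
    (k l : ℝ) (hk : k = -1 ∨ k = 1) (hl : l = -1 ∨ l = 1)
    (C S : ℝ → ℝ)
    (hC : ∀ φ, HasDerivAt C (γ * ((S φ) ^ 3 - S φ)) φ)
    (hS : ∀ φ, HasDerivAt S (-((C φ) ^ 3 - C φ)) φ) :
    ∀ φ, HasDerivAt
      (fun φ => γ * ((S φ) ^ 3 - S φ) * (S φ - l) - (C φ - k) * (-((C φ) ^ 3 - C φ)))
      (γ * (C φ - k) * (S φ - l) * (k * C φ - l * S φ) *
        (3 * k * l * C φ * S φ + k * C φ + l * S φ + 1)) φ := by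
  intro φ
  have hs := hS φ
  have hc := hC φ
  have h1 : HasDerivAt (fun φ => γ * ((S φ) ^ 3 - S φ) * (S φ - l))
      ((γ * (3 * (S φ) ^ 2 * (-((C φ) ^ 3 - C φ)) - (-((C φ) ^ 3 - C φ)))) * (S φ - l)
        + γ * ((S φ) ^ 3 - S φ) * (-((C φ) ^ 3 - C φ))) φ := by
    exact (((hs.pow 3).sub hs).const_mul γ).mul (hs.sub_const l)
  have h2 : HasDerivAt (fun φ => (C φ - k) * (-((C φ) ^ 3 - C φ)))
      ((γ * ((S φ) ^ 3 - S φ)) * (-((C φ) ^ 3 - C φ))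
        + (C φ - k) * (-(3 * (C φ) ^ 2 * (γ * ((S φ) ^ 3 - S φ)) - γ * ((S φ) ^ 3 - S φ)))) φ := by
    exact (hc.sub_const k).mul (((hc.pow 3).sub hc).neg)
  have : HasDerivAt (fun φ => γ * ((S φ) ^ 3 - S φ) * (S φ - l) - (C φ - k) * (-((C φ) ^ 3 - C φ))) _ φ := h1.sub h2
  convert this using 1
  rcases hk with hk | hk <;> rcases hl with hl | hl <;> subst hk <;> subst hl <;> ring
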